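/- Let k ≥ 4 and let L_k be the LOT group. The assignment sending every generator a_i to 1 ∈ ℤ determines a well-defined surjective group homomorphism q : L_k → ℤ, and the kernel of q is isomorphic to the free group of rank k. In particular L_k is free-by-cyclic and isomorphic to F_k ⋊ ℤ. -/

import Mathlib

open Fin.NatCast in
/-- The `i`-th generator `a_i` of the LOT group `L_k`, as an element of the free group
on the `k+1` letters `a_0, …, a_k`. -/
def lotGen (k : ℕ) (i : ℕ) : FreeGroup (Fin (k + 1)) :=
  FreeGroup.of ((i : ℕ) : Fin (k + 1))

/-- The relators of the LOT group `L_k`: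
`a_{i+1} a_i a_{i+1}⁻¹ a_k⁻¹` for `i = 0, …, k-2`, together with
`a_0 a_k a_0⁻¹ a_{k-1}⁻¹`. -/
def lotRels (k : ℕ) : Set (FreeGroup (Fin (k + 1))) :=
  {r | ∃ i : ℕ, i ≤ k - 2 ∧
      r = lotGen k (i + 1) * lotGen k i * (lotGen k (i + 1))⁻¹ * (lotGen k k)⁻¹} ∪
  {lotGen k 0 * lotGen k k * (lotGen k 0)⁻¹ * (lotGen k (k - 1))⁻¹}

/-- The LOT group `L_k`. -/
def LOT (k : ℕ) : Type := PresentedGroup (lotRels k)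

instance (k : ℕ) : Group (LOT k) := by unfold LOT; infer_instance

/-- The image of the generator `a_i` in `L_k`. -/
def LOT.a (k : ℕ) (i : Fin (k + 1)) : LOT k := PresentedGroup.of i

namespace LOTaux

open Fin.NatCast



/-! ### The automorphism of the free group of rank `k` -/

/-- `lgen k m` is the `m`-th generator of `FreeGroup (Fin k)` (or `1` if `m ≥ k`). -/
def lgen (k m : ℕ) : FreeGroup (Fin k) :=
  if h : m < k then FreeGroup.of ⟨m, h⟩ else 1

/-- `lotP k m` is the word `(y_{k-1}⁻¹ y_{m-1}) (y_{k-1}⁻¹ y_{m-2}) ⋯ (y_{k-1}⁻¹ y_0)`. -/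
def lotP (k : ℕ) : ℕ → FreeGroup (Fin k)
  | 0 => 1
  | m + 1 => (lgen k (k - 1))⁻¹ * (lgen k m * lotP k m)

def phiFun (k : ℕ) (j : Fin k) : FreeGroup (Fin k) :=
  if (j : ℕ) = k - 1 then lgen k (k - 2) else lotP k ((j : ℕ) + 1)

def psiTop (k : ℕ) : FreeGroup (Fin k) :=
  lgen k (k - 1) * lgen k (k - 3) * (lgen k (k - 2))⁻¹

def psiFun (k : ℕ) (j : Fin k) : FreeGroup (Fin k) :=
  if (j : ℕ) = k - 1 then psiTop k
  else if (j : ℕ) = 0 then psiTop k * lgen k 0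
  else psiTop k * lgen k (j : ℕ) * (lgen k ((j : ℕ) - 1))⁻¹

def phiHom (k : ℕ) : FreeGroup (Fin k) →* FreeGroup (Fin k) := FreeGroup.lift (phiFun k)
def psiHom (k : ℕ) : FreeGroup (Fin k) →* FreeGroup (Fin k) := FreeGroup.lift (psiFun k)

lemma phiHom_lgen_top (k : ℕ) (hk : 4 ≤ k) : phiHom k (lgen k (k - 1)) = lgen k (k - 2) := by
  have h : k - 1 < k := by omega
  simp only [phiHom, lgen, dif_pos h, FreeGroup.lift_apply_of, phiFun]
  simp

lemma phiHom_lgen (k m : ℕ) (hm : m < k - 1) : phiHom k (lgen k m) = lotP k (m + 1) := by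
  have h : m < k := by omega
  have h2 : m ≠ k - 1 := by omega
  simp only [phiHom, lgen, dif_pos h, FreeGroup.lift_apply_of, phiFun]
  simp [h2]

lemma psiHom_lgen_top (k : ℕ) (hk : 4 ≤ k) : psiHom k (lgen k (k - 1)) = psiTop k := by
  have h : k - 1 < k := by omega
  simp only [psiHom, lgen, dif_pos h, FreeGroup.lift_apply_of, psiFun]
  simp

lemma psiHom_lgen_zero (k : ℕ) (hk : 4 ≤ k) : psiHom k (lgen k 0) = psiTop k * lgen k 0 := by
  have h : 0 < k := by omega
  have h2 : (0 : ℕ) ≠ k - 1 := by omega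
  simp only [psiHom, lgen, dif_pos h, FreeGroup.lift_apply_of, psiFun]
  simp [h2]

lemma psiHom_lgen (k m : ℕ) (hm1 : 1 ≤ m) (hm : m < k - 1) :
    psiHom k (lgen k m) = psiTop k * lgen k m * (lgen k (m - 1))⁻¹ := by
  have h : m < k := by omega
  have h2 : m ≠ k - 1 := by omega
  have h3 : m ≠ 0 := by omega
  simp only [psiHom, lgen, dif_pos h, FreeGroup.lift_apply_of, psiFun]
  simp [h2, h3]

lemma psiHom_lotP (k : ℕ) (hk : 4 ≤ k) :
    ∀ m, m + 1 ≤ k - 1 → psiHom k (lotP k (m + 1)) = lgen k m := by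
  intro m
  induction m with
  | zero =>
    intro h
    rw [show lotP k 1 = (lgen k (k - 1))⁻¹ * (lgen k 0 * lotP k 0) from rfl]
    simp only [lotP, map_mul, map_inv, psiHom_lgen_top k hk, psiHom_lgen_zero k hk, map_one,
      mul_one]
    group
  | succ m ih =>
    intro h
    rw [show lotP k (m + 2) = (lgen k (k - 1))⁻¹ * (lgen k (m + 1) * lotP k (m + 1)) from rfl]
    rw [map_mul, map_mul, map_inv, psiHom_lgen_top k hk,
      psiHom_lgen k (m + 1) (by omega) (by omega), ih (by omega)]
    simp only [Nat.add_sub_cancel]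
    group

lemma psi_phi (k : ℕ) (hk : 4 ≤ k) : (psiHom k).comp (phiHom k) = MonoidHom.id _ := by
  apply FreeGroup.ext_hom
  intro j
  have hj : (j : ℕ) < k := j.isLt
  have hofj : FreeGroup.of j = lgen k (j : ℕ) := by simp [lgen, hj]
  simp only [MonoidHom.comp_apply, MonoidHom.id_apply]
  by_cases hcase : (j : ℕ) = k - 1
  · rw [hofj, hcase, phiHom_lgen_top k hk]
    rw [psiHom_lgen k (k - 2) (by omega) (by omega)]
    rw [show k - 2 - 1 = k - 3 from by omega]
    rw [psiTop]
    group
  · rw [hofj, phiHom_lgen k (j : ℕ) (by omega), psiHom_lotP k hk (j : ℕ) (by omega)]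

lemma phi_psiTop (k : ℕ) (hk : 4 ≤ k) : phiHom k (psiTop k) = lgen k (k - 1) := by
  rw [psiTop, map_mul, map_mul, map_inv, phiHom_lgen_top k hk,
    phiHom_lgen k (k - 3) (by omega), phiHom_lgen k (k - 2) (by omega),
    show k - 3 + 1 = k - 2 from by omega,
    show lotP k (k - 2 + 1) = (lgen k (k - 1))⁻¹ * (lgen k (k - 2) * lotP k (k - 2)) from rfl]
  group

lemma phi_psi (k : ℕ) (hk : 4 ≤ k) : (phiHom k).comp (psiHom k) = MonoidHom.id _ := by
  apply FreeGroup.ext_hom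
  intro j
  have hj : (j : ℕ) < k := j.isLt
  have hofj : FreeGroup.of j = lgen k (j : ℕ) := by simp [lgen, hj]
  simp only [MonoidHom.comp_apply, MonoidHom.id_apply]
  by_cases hcase : (j : ℕ) = k - 1
  · rw [hofj, hcase, psiHom_lgen_top k hk, phi_psiTop k hk]
  · by_cases h0 : (j : ℕ) = 0
    · rw [hofj, h0, psiHom_lgen_zero k hk, map_mul, phi_psiTop k hk,
        phiHom_lgen k 0 (by omega), show lotP k 1 = (lgen k (k-1))⁻¹ * (lgen k 0 * lotP k 0)
          from rfl]
      rw [show lotP k 0 = 1 from rfl]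
      group
    · rw [hofj, psiHom_lgen k (j : ℕ) (by omega) (by omega), map_mul, map_mul, map_inv,
        phi_psiTop k hk, phiHom_lgen k (j : ℕ) (by omega),
        phiHom_lgen k ((j : ℕ) - 1) (by omega),
        show (j : ℕ) - 1 + 1 = (j : ℕ) from by omega,
        show lotP k ((j:ℕ) + 1) = (lgen k (k - 1))⁻¹ * (lgen k (j:ℕ) * lotP k (j:ℕ)) from rfl]
      group

/-- The automorphism `φ` of the free group of rank `k`. -/
def phiAut (k : ℕ) (hk : 4 ≤ k) : MulAut (FreeGroup (Fin k)) :=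
  MonoidHom.toMulEquiv (phiHom k) (psiHom k) (psi_phi k hk) (phi_psi k hk)

lemma phiAut_apply (k : ℕ) (hk : 4 ≤ k) (x : FreeGroup (Fin k)) :
    phiAut k hk x = phiHom k x := rfl

lemma phiAut_symm_apply (k : ℕ) (hk : 4 ≤ k) (x : FreeGroup (Fin k)) :
    (phiAut k hk).symm x = psiHom k x := rfl




/-- `A k m` is the image of the generator `a_m` in `L_k`. -/
def A (k m : ℕ) : LOT k := LOT.a k ((m : ℕ) : Fin (k + 1))

lemma mk_lotGen (k m : ℕ) : PresentedGroup.mk (lotRels k) (lotGen k m) = A k m := rfl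

lemma mk_rel_eq_one (k : ℕ) {r : FreeGroup (Fin (k + 1))} (hr : r ∈ lotRels k) :
    PresentedGroup.mk (lotRels k) r = 1 :=
  (QuotientGroup.eq_one_iff r).mpr (Subgroup.subset_normalClosure hr)

lemma lot_rel1 (k i : ℕ) (hi : i ≤ k - 2) :
    A k (i + 1) * A k i * (A k (i + 1))⁻¹ = A k k := by
  have hmem : lotGen k (i + 1) * lotGen k i * (lotGen k (i + 1))⁻¹ * (lotGen k k)⁻¹ ∈
      lotRels k := Or.inl ⟨i, hi, rfl⟩
  have h1 := mk_rel_eq_one k hmem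
  rw [map_mul, map_mul, map_mul, map_inv, map_inv, mk_lotGen, mk_lotGen, mk_lotGen] at h1
  exact (mul_inv_eq_one (G := LOT k)).mp h1

lemma lot_rel2 (k : ℕ) :
    A k 0 * A k k * (A k 0)⁻¹ = A k (k - 1) := by
  have hmem : lotGen k 0 * lotGen k k * (lotGen k 0)⁻¹ * (lotGen k (k - 1))⁻¹ ∈ lotRels k :=
    Or.inr rfl
  have h1 := mk_rel_eq_one k hmem
  rw [map_mul, map_mul, map_mul, map_inv, map_inv, mk_lotGen, mk_lotGen, mk_lotGen] at h1
  exact (mul_inv_eq_one (G := LOT k)).mp h1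



open SemidirectProduct

/-! ### The homomorphism `F_k →* L_k` sending `y_j ↦ a_{j+1} a_0⁻¹` -/

def fN (k : ℕ) : FreeGroup (Fin k) →* LOT k :=
  FreeGroup.lift (fun j : Fin k => A k ((j : ℕ) + 1) * (A k 0)⁻¹)

lemma fN_lgen (k m : ℕ) (h : m < k) : fN k (lgen k m) = A k (m + 1) * (A k 0)⁻¹ := by
  simp only [fN, lgen, dif_pos h, FreeGroup.lift_apply_of]

lemma fN_of (k : ℕ) (j : Fin k) : fN k (FreeGroup.of j) = A k ((j : ℕ) + 1) * (A k 0)⁻¹ := by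
  simp [fN]

lemma fN_lotP (k : ℕ) (hk : 4 ≤ k) :
    ∀ m, m ≤ k - 1 → fN k (lotP k m) = A k 0 * A k m * (A k 0)⁻¹ * (A k 0)⁻¹ := by
  intro m
  induction m with
  | zero =>
    intro _
    rw [show lotP k 0 = 1 from rfl, map_one]
    group
  | succ m ih =>
    intro h
    have hrel : A k (m + 1) * A k m = A k k * A k (m + 1) := by
      have := lot_rel1 k m (by omega)
      calc A k (m + 1) * A k m
          = (A k (m + 1) * A k m * (A k (m + 1))⁻¹) * A k (m + 1) := by group
        _ = A k k * A k (m + 1) := by rw [this]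
    rw [show lotP k (m + 1) = (lgen k (k - 1))⁻¹ * (lgen k m * lotP k m) from rfl]
    rw [map_mul, map_mul, map_inv, fN_lgen k (k - 1) (by omega), fN_lgen k m (by omega),
      ih (by omega), show k - 1 + 1 = k from by omega]
    calc (A k k * (A k 0)⁻¹)⁻¹ *
          (A k (m + 1) * (A k 0)⁻¹ * (A k 0 * A k m * (A k 0)⁻¹ * (A k 0)⁻¹))
        = A k 0 * (A k k)⁻¹ * (A k (m + 1) * A k m) * (A k 0)⁻¹ * (A k 0)⁻¹ := by group
      _ = A k 0 * (A k k)⁻¹ * (A k k * A k (m + 1)) * (A k 0)⁻¹ * (A k 0)⁻¹ := by rw [hrel]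
      _ = A k 0 * A k (m + 1) * (A k 0)⁻¹ * (A k 0)⁻¹ := by group

lemma fN_phiFun (k : ℕ) (hk : 4 ≤ k) (j : Fin k) :
    fN k (phiFun k j) = A k 0 * fN k (FreeGroup.of j) * (A k 0)⁻¹ := by
  rw [fN_of]
  by_cases hcase : (j : ℕ) = k - 1
  · rw [phiFun, if_pos hcase, fN_lgen k (k - 2) (by omega),
      show k - 2 + 1 = k - 1 from by omega, ← lot_rel2 k, hcase,
      show k - 1 + 1 = k from by omega]
    group
  · have hj : (j : ℕ) < k := j.isLt
    rw [phiFun, if_neg hcase, fN_lotP k hk ((j : ℕ) + 1) (by omega)]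
    group

lemma fN_phi (k : ℕ) (hk : 4 ≤ k) (w : FreeGroup (Fin k)) :
    fN k (phiAut k hk w) = A k 0 * fN k w * (A k 0)⁻¹ := by
  have : (fN k).comp (phiAut k hk).toMonoidHom
      = (MulAut.conj (A k 0)).toMonoidHom.comp (fN k) := by
    apply FreeGroup.ext_hom
    intro j
    simp only [MonoidHom.comp_apply, MulEquiv.coe_toMonoidHom, MulAut.conj_apply]
    rw [phiAut_apply, show phiHom k (FreeGroup.of j) = phiFun k j from FreeGroup.lift_apply_of]
    exact fN_phiFun k hk j
  have := DFunLike.congr_fun this w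
  simpa using this

lemma fN_psi (k : ℕ) (hk : 4 ≤ k) (w : FreeGroup (Fin k)) :
    fN k ((phiAut k hk)⁻¹ w) = (A k 0)⁻¹ * fN k w * A k 0 := by
  have := fN_phi k hk ((phiAut k hk)⁻¹ w)
  rw [show phiAut k hk ((phiAut k hk)⁻¹ w) = w from (phiAut k hk).apply_symm_apply w] at this
  rw [this]
  group

lemma fN_zpow (k : ℕ) (hk : 4 ≤ k) (z : ℤ) (w : FreeGroup (Fin k)) :
    fN k ((phiAut k hk ^ z) w) = (A k 0) ^ z * fN k w * ((A k 0) ^ z)⁻¹ := by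
  induction z using Int.induction_on generalizing w with
  | zero => simp
  | succ n ih =>
    rw [zpow_add_one,
      show ((phiAut k hk ^ (n : ℤ) * phiAut k hk) w) = (phiAut k hk ^ (n : ℤ))
        (phiAut k hk w) from rfl,
      ih (phiAut k hk w), fN_phi k hk w, zpow_add_one]
    group
  | pred n ih =>
    rw [show (-(n : ℤ) - 1) = -(n : ℤ) + (-1) from by ring, zpow_add,
      show ((phiAut k hk ^ (-(n : ℤ)) * phiAut k hk ^ (-1 : ℤ)) w) = (phiAut k hk ^ (-(n : ℤ)))
        ((phiAut k hk ^ (-1 : ℤ)) w) from rfl,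
      show (phiAut k hk ^ (-1 : ℤ)) w = (phiAut k hk)⁻¹ w from by rw [zpow_neg_one],
      ih ((phiAut k hk)⁻¹ w), fN_psi k hk w, zpow_add]
    group

/-! ### The semidirect product and the maps in both directions -/

def phiZ (k : ℕ) (hk : 4 ≤ k) : Multiplicative ℤ →* MulAut (FreeGroup (Fin k)) :=
  zpowersHom _ (phiAut k hk)

/-- The semidirect product `F_k ⋊ ℤ`. -/
abbrev Gk (k : ℕ) (hk : 4 ≤ k) : Type :=
  SemidirectProduct (FreeGroup (Fin k)) (Multiplicative ℤ) (phiZ k hk)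

def fG (k : ℕ) : Multiplicative ℤ →* LOT k := zpowersHom _ (A k 0)

lemma compat (k : ℕ) (hk : 4 ≤ k) (g : Multiplicative ℤ) :
    (fN k).comp ((phiZ k hk g)).toMonoidHom
      = (MulAut.conj (fG k g)).toMonoidHom.comp (fN k) := by
  apply MonoidHom.ext
  intro w
  simp only [MonoidHom.comp_apply, MulEquiv.coe_toMonoidHom, MulAut.conj_apply, phiZ,
    zpowersHom_apply, fG]
  rw [fN_zpow k hk g.toAdd w]

/-- The homomorphism `F_k ⋊ ℤ →* L_k`. -/
def Theta' (k : ℕ) (hk : 4 ≤ k) : Gk k hk →* LOT k :=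
  SemidirectProduct.lift (fN k) (fG k) (compat k hk)

/-- The generator images in `F_k ⋊ ℤ`. -/
def bgen (k : ℕ) (i : Fin (k + 1)) : FreeGroup (Fin k) :=
  if (i : ℕ) = 0 then 1 else lgen k ((i : ℕ) - 1)

def fgenfun (k : ℕ) (hk : 4 ≤ k) (i : Fin (k + 1)) : Gk k hk :=
  inl (bgen k i) * inr (Multiplicative.ofAdd 1)

lemma phiZ_ofAdd_one (k : ℕ) (hk : 4 ≤ k) :
    phiZ k hk (Multiplicative.ofAdd 1) = phiAut k hk := by
  rw [phiZ, zpowersHom_apply]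
  norm_num

lemma inr_t_inl (k : ℕ) (hk : 4 ≤ k) (x : FreeGroup (Fin k)) :
    (inr (Multiplicative.ofAdd 1) : Gk k hk) * inl x
      = inl (phiAut k hk x) * inr (Multiplicative.ofAdd 1) := by
  have := inl_aut (φ := phiZ k hk) (Multiplicative.ofAdd (1 : ℤ)) x
  rw [phiZ_ofAdd_one k hk, map_inv] at this
  rw [this, inv_mul_cancel_right]

lemma inr_t_inl' (k : ℕ) (hk : 4 ≤ k) (x : FreeGroup (Fin k)) (y : Gk k hk) :
    (inr (Multiplicative.ofAdd 1) : Gk k hk) * (inl x * y)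
      = inl (phiAut k hk x) * (inr (Multiplicative.ofAdd 1) * y) := by
  rw [← mul_assoc, inr_t_inl k hk, mul_assoc]

lemma sdp_rel (k : ℕ) (hk : 4 ≤ k) (b1 b2 b3 b4 : FreeGroup (Fin k))
    (h : b1 * phiAut k hk b2 * (phiAut k hk b3)⁻¹ * b4⁻¹ = 1) :
    (inl b1 * inr (Multiplicative.ofAdd 1)) * (inl b2 * inr (Multiplicative.ofAdd 1)) *
      (inl b3 * inr (Multiplicative.ofAdd 1))⁻¹ *
      (inl b4 * inr (Multiplicative.ofAdd 1))⁻¹ = (1 : Gk k hk) := by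
  simp only [mul_inv_rev, mul_assoc, mul_inv_cancel_left]
  rw [show ((inl b3 : Gk k hk))⁻¹ = inl b3⁻¹ from by rw [map_inv],
    show ((inl b4 : Gk k hk))⁻¹ = inl b4⁻¹ from by rw [map_inv]]
  rw [inr_t_inl' k hk, inr_t_inl' k hk, mul_inv_cancel_left, map_inv,
    ← map_mul, ← map_mul, ← map_mul,
    show b1 * (phiAut k hk b2 * ((phiAut k hk b3)⁻¹ * b4⁻¹))
      = b1 * phiAut k hk b2 * (phiAut k hk b3)⁻¹ * b4⁻¹ from by group, h, map_one]

lemma lift_lotGen (k : ℕ) (hk : 4 ≤ k) (m : ℕ) :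
    FreeGroup.lift (fgenfun k hk) (lotGen k m) = fgenfun k hk ((m : ℕ) : Fin (k + 1)) := by
  simp [lotGen]

lemma bgen_cast_zero (k : ℕ) : bgen k ((0 : ℕ) : Fin (k + 1)) = 1 := by
  simp [bgen]

lemma bgen_cast (k m : ℕ) (hm1 : 1 ≤ m) (hm : m ≤ k) :
    bgen k ((m : ℕ) : Fin (k + 1)) = lgen k (m - 1) := by
  have h : ((m : Fin (k + 1)) : ℕ) = m := Fin.val_cast_of_lt (by omega)
  rw [bgen, h, if_neg (by omega)]

lemma relcheck (k : ℕ) (hk : 4 ≤ k) :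
    ∀ r ∈ lotRels k, FreeGroup.lift (fgenfun k hk) r = 1 := by
  rintro r (⟨i, hi, rfl⟩ | rfl) <;>
    simp only [map_mul, map_inv, lift_lotGen k hk]
  · -- relator `a_{i+1} a_i a_{i+1}⁻¹ a_k⁻¹`
    show (inl (bgen k _) * inr _) * (inl (bgen k _) * inr _) *
      (inl (bgen k _) * inr _)⁻¹ * (inl (bgen k _) * inr _)⁻¹ = 1
    apply sdp_rel k hk
    rw [bgen_cast k (i + 1) (by omega) (by omega), bgen_cast k k (by omega) (by omega)]
    rcases Nat.eq_zero_or_pos i with hi0 | hi0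
    · subst hi0
      rw [bgen_cast_zero, map_one, Nat.add_sub_cancel, phiAut_apply,
        phiHom_lgen k 0 (by omega),
        show lotP k 1 = (lgen k (k - 1))⁻¹ * (lgen k 0 * lotP k 0) from rfl,
        show lotP k 0 = 1 from rfl]
      group
    · rw [bgen_cast k i (by omega) (by omega), Nat.add_sub_cancel, phiAut_apply, phiAut_apply,
        phiHom_lgen k (i - 1) (by omega), phiHom_lgen k i (by omega),
        show i - 1 + 1 = i from by omega,
        show lotP k (i + 1) = (lgen k (k - 1))⁻¹ * (lgen k i * lotP k i) from rfl]
      group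
  · -- relator `a_0 a_k a_0⁻¹ a_{k-1}⁻¹`
    show (inl (bgen k _) * inr _) * (inl (bgen k _) * inr _) *
      (inl (bgen k _) * inr _)⁻¹ * (inl (bgen k _) * inr _)⁻¹ = 1
    apply sdp_rel k hk
    rw [bgen_cast_zero, bgen_cast k k (by omega) (by omega),
      bgen_cast k (k - 1) (by omega) (by omega), map_one, phiAut_apply,
      phiHom_lgen_top k hk, show k - 1 - 1 = k - 2 from by omega]
    group

/-- The homomorphism `L_k →* F_k ⋊ ℤ`. -/
def Theta (k : ℕ) (hk : 4 ≤ k) : LOT k →* Gk k hk :=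
  PresentedGroup.toGroup (relcheck k hk)

lemma Theta_a (k : ℕ) (hk : 4 ≤ k) (i : Fin (k + 1)) :
    Theta k hk (LOT.a k i) = fgenfun k hk i :=
  PresentedGroup.toGroup.of (relcheck k hk)

lemma Theta_A (k : ℕ) (hk : 4 ≤ k) (m : ℕ) :
    Theta k hk (A k m) = fgenfun k hk ((m : ℕ) : Fin (k + 1)) :=
  Theta_a k hk _

lemma fG_ofAdd_one (k : ℕ) : fG k (Multiplicative.ofAdd 1) = A k 0 := by
  rw [fG, zpowersHom_apply]
  norm_num

lemma h1 (k : ℕ) (hk : 4 ≤ k) :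
    (Theta' k hk).comp (Theta k hk) = MonoidHom.id (LOT k) := by
  apply PresentedGroup.ext
  intro i
  have hΘ : Theta k hk (PresentedGroup.of i) = fgenfun k hk i := Theta_a k hk i
  show Theta' k hk (Theta k hk (PresentedGroup.of i)) = PresentedGroup.of i
  rw [hΘ, fgenfun, map_mul,
    show Theta' k hk (inl (bgen k i)) = fN k (bgen k i) from lift_inl _ _ _ _,
    show Theta' k hk (inr (Multiplicative.ofAdd 1)) = fG k (Multiplicative.ofAdd 1) from
      lift_inr _ _ _ _, fG_ofAdd_one]
  by_cases h0 : (i : ℕ) = 0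
  · have : i = ((0 : ℕ) : Fin (k + 1)) := by
      apply Fin.ext
      simp [h0]
    rw [bgen, if_pos h0, show fN k (1 : FreeGroup (Fin k)) = 1 from map_one _, one_mul, this]
    rfl
  · have hi : (i : ℕ) < k + 1 := i.isLt
    rw [bgen, if_neg h0, fN_lgen k ((i : ℕ) - 1) (by omega),
      show (i : ℕ) - 1 + 1 = (i : ℕ) from by omega, inv_mul_cancel_right]
    show LOT.a k (((i : ℕ) : Fin (k + 1))) = _
    rw [Fin.cast_val_eq_self]
    rfl

lemma h2 (k : ℕ) (hk : 4 ≤ k) :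
    (Theta k hk).comp (Theta' k hk) = MonoidHom.id (Gk k hk) := by
  apply SemidirectProduct.hom_ext
  · apply FreeGroup.ext_hom
    intro j
    have hj : (j : ℕ) < k := j.isLt
    simp only [MonoidHom.comp_apply, MonoidHom.id_apply]
    rw [show Theta' k hk (inl (FreeGroup.of j)) = fN k (FreeGroup.of j) from lift_inl _ _ _ _,
      fN_of, map_mul, map_inv, Theta_A k hk ((j : ℕ) + 1), Theta_A k hk 0, fgenfun, fgenfun,
      bgen_cast k ((j : ℕ) + 1) (by omega) (by omega), Nat.add_sub_cancel, bgen_cast_zero,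
      show (inl (1 : FreeGroup (Fin k)) : Gk k hk) = 1 from map_one _, one_mul,
      mul_inv_cancel_right]
    congr 1
    simp [lgen, hj]
  · apply MonoidHom.ext_mint
    simp only [MonoidHom.comp_apply, MonoidHom.id_apply]
    rw [show Theta' k hk (inr (Multiplicative.ofAdd 1)) = fG k (Multiplicative.ofAdd 1) from
      lift_inr _ _ _ _, fG_ofAdd_one, Theta_A k hk 0, fgenfun, bgen_cast_zero,
      show (inl (1 : FreeGroup (Fin k)) : Gk k hk) = 1 from map_one _, one_mul]

/-- The isomorphism `L_k ≃* F_k ⋊ ℤ`. -/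
def eIso (k : ℕ) (hk : 4 ≤ k) : LOT k ≃* Gk k hk :=
  MonoidHom.toMulEquiv (Theta k hk) (Theta' k hk) (h1 k hk) (h2 k hk)

end LOTaux

theorem LOT_free_by_cyclic' (k : ℕ) (hk : 4 ≤ k) :
    ∃ q : LOT k →* Multiplicative ℤ,
      (∀ i : Fin (k + 1), q (LOT.a k i) = Multiplicative.ofAdd 1) ∧
      Function.Surjective q ∧
      Nonempty (q.ker ≃* FreeGroup (Fin k)) ∧
      ∃ φ : Multiplicative ℤ →* MulAut (FreeGroup (Fin k)),
        Nonempty (LOT k ≃* FreeGroup (Fin k) ⋊[φ] Multiplicative ℤ) := by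
  classical
  open LOTaux SemidirectProduct in
  refine ⟨SemidirectProduct.rightHom.comp (Theta k hk), fun i => ?_, ?_, ?_,
    phiZ k hk, ⟨eIso k hk⟩⟩
  · rw [MonoidHom.comp_apply, Theta_a k hk i, fgenfun, map_mul, rightHom_inl, rightHom_inr,
      one_mul]
  · intro z
    refine ⟨Theta' k hk (inr z), ?_⟩
    have := DFunLike.congr_fun (h2 k hk) (inr z : Gk k hk)
    simp only [MonoidHom.comp_apply, MonoidHom.id_apply] at this
    rw [MonoidHom.comp_apply, this, rightHom_inr]
  · set q := SemidirectProduct.rightHom.comp (Theta k hk) with hq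
    have hsurj : Function.Surjective (Theta k hk) := fun x =>
      ⟨Theta' k hk x, by simpa using DFunLike.congr_fun (h2 k hk) x⟩
    have hker : MonoidHom.ker q =
        Subgroup.comap (Theta k hk) (MonoidHom.ker (rightHom (φ := phiZ k hk))) :=
      (MonoidHom.comap_ker _ _).symm
    have hco : ((eIso k hk : LOT k ≃* Gk k hk) : LOT k →* Gk k hk) = Theta k hk :=
      MonoidHom.ext fun x => rfl
    have hmap : Subgroup.map ((eIso k hk : LOT k ≃* Gk k hk) : LOT k →* Gk k hk)
        (MonoidHom.ker q) = MonoidHom.range (inl (φ := phiZ k hk)) := by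
      rw [hco, hker, Subgroup.map_comap_eq_self_of_surjective hsurj,
        range_inl_eq_ker_rightHom]
    exact ⟨(((eIso k hk).subgroupMap (MonoidHom.ker q)).trans
      (MulEquiv.subgroupCongr hmap)).trans (MonoidHom.ofInjective inl_injective).symm⟩

/-- For `k ≥ 4`, sending every generator `a_i` of `L_k` to `1 ∈ ℤ` gives a
well-defined surjective group homomorphism `q : L_k → ℤ` whose kernel is free of rank `k`;
in particular `L_k` is free-by-cyclic and isomorphic to `F_k ⋊ ℤ`. -/
theorem LOT_free_by_cyclic (k : ℕ) (hk : 4 ≤ k) :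
    ∃ q : LOT k →* Multiplicative ℤ,
      (∀ i : Fin (k + 1), q (LOT.a k i) = Multiplicative.ofAdd 1) ∧
      Function.Surjective q ∧
      Nonempty (q.ker ≃* FreeGroup (Fin k)) ∧
      ∃ φ : Multiplicative ℤ →* MulAut (FreeGroup (Fin k)),
        Nonempty (LOT k ≃* FreeGroup (Fin k) ⋊[φ] Multiplicative ℤ) :=
  LOT_free_by_cyclic' k hk
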